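/- arXiv:2402.14716 — 2 statements merged into one kernel-verified Lean document; each statement's English description precedes it below -/
import Mathlib

section
/- The mixed improper Gramian P̃_i := Σ_{k=0}^{ν−1} F_N(k)·B·B̂^T·F̂_N(k)^T solves the projected generalized discrete-time Sylvester equation A·P̃_i·Â^T − E·P̃_i·Ê^T = (I − P_l)·B·B̂^T·(I − P̂_l)^T together with the projection condition P_r·P̃_i·P̂_r^T = 0. -/
open MeasureTheory Matrix

/-- The matrix exponential of a real square matrix. -/
noncomputable def mexp {d : ℕ} (X : Matrix (Fin d) (Fin d) ℝ) : Matrix (Fin d) (Fin d) ℝ :=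
  NormedSpace.exp X

/-- The operator norm on real matrices, induced by the Euclidean (`ℓ²`) norms. -/
noncomputable def opNorm {d e : ℕ} (X : Matrix (Fin d) (Fin e) ℝ) : ℝ :=
  letI := Matrix.instL2OpNormedAddCommGroup (m := Fin d) (n := Fin e) (𝕜 := ℝ)
  ‖X‖

/-- Entrywise integral over `(0, ∞)` of a matrix-valued function. -/
noncomputable def matIntIoi {a b : Type*} (F : ℝ → Matrix a b ℝ) : Matrix a b ℝ :=
  Matrix.of fun i j => ∫ t in Set.Ioi (0:ℝ), F t i j

/-- Entrywise integrability over `(0, ∞)` of a matrix-valued function. -/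
def MatIntegrableIoi {a b : Type*} (F : ℝ → Matrix a b ℝ) : Prop :=
  ∀ i j, MeasureTheory.IntegrableOn (fun t => F t i j) (Set.Ioi 0)

/-- Kronecker product of two vectors in `ℝ^m`, an element of `ℝ^{m²}`. -/
def kron {m : ℕ} (a b : Fin m → ℝ) : Fin m × Fin m → ℝ := fun p => a p.1 * b p.2

/-- Vectorization of an `m × m` matrix as an element of `ℝ^{m²}`. -/
def vecm {m : ℕ} (X : Matrix (Fin m) (Fin m) ℝ) : Fin m × Fin m → ℝ := fun p => X p.1 p.2

/-- Squared Euclidean norm of a vector. -/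
def enormSq {ι : Type*} [Fintype ι] (v : ι → ℝ) : ℝ := ∑ i, (v i) ^ 2

/-- Euclidean inner product of two vectors. -/
def dotv {ι : Type*} [Fintype ι] (v w : ι → ℝ) : ℝ := ∑ i, v i * w i

/-- The mixed improper Gramian `P̃_i = ∑_{k<ν} F_N(k)·B·B̂ᵀ·F̂_N(k)ᵀ` solves the
projected generalized discrete-time Sylvester equation
`A·P̃_i·Âᵀ − E·P̃_i·Êᵀ = (I − P_l)·B·B̂ᵀ·(I − P̂_l)ᵀ` together with `P_r·P̃_i·P̂_rᵀ = 0`. -/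
theorem mixed_improper_gramian_sylvester
    {nf ni m : ℕ} (hm : 0 < m) (ν : ℕ) (hν : 0 < ν)
    -- Weierstraß canonical form data for the full-order system
    (W T Winv Tinv : Matrix (Fin nf ⊕ Fin ni) (Fin nf ⊕ Fin ni) ℝ)
    (hW : W * Winv = 1) (hW' : Winv * W = 1)
    (hT : T * Tinv = 1) (hT' : Tinv * T = 1)
    (J : Matrix (Fin nf) (Fin nf) ℝ) (N : Matrix (Fin ni) (Fin ni) ℝ) (hN : N ^ ν = 0)
    (C α : ℝ) (hC : 0 < C) (hα : 0 < α)
    (hJ : ∀ t : ℝ, 0 ≤ t → opNorm (mexp (t • J)) ≤ C * Real.exp (-α * t))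
    (E A : Matrix (Fin nf ⊕ Fin ni) (Fin nf ⊕ Fin ni) ℝ)
    (hE : E = W * fromBlocks 1 0 0 N * T)
    (hA : A = W * fromBlocks J 0 0 1 * T)
    (B : Matrix (Fin nf ⊕ Fin ni) (Fin m) ℝ)
    (M : Matrix (Fin nf ⊕ Fin ni) (Fin nf ⊕ Fin ni) ℝ) (hM : M.IsSymm)
    -- spectral projectors
    (Pr Pl : Matrix (Fin nf ⊕ Fin ni) (Fin nf ⊕ Fin ni) ℝ)
    (hPr : Pr = Tinv * fromBlocks 1 0 0 0 * T)
    (hPl : Pl = W * fromBlocks 1 0 0 0 * Winv)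
    -- fundamental solution matrices
    (FJ : ℝ → Matrix (Fin nf ⊕ Fin ni) (Fin nf ⊕ Fin ni) ℝ)
    (hFJ : ∀ t : ℝ, FJ t = Tinv * fromBlocks (mexp (t • J)) 0 0 0 * Winv)
    (FN : ℕ → Matrix (Fin nf ⊕ Fin ni) (Fin nf ⊕ Fin ni) ℝ)
    (hFN : ∀ k : ℕ, FN k = Tinv * fromBlocks 0 0 0 (-(N ^ k)) * Winv)
    -- proper and improper controllability Gramians
    (Pp : Matrix (Fin nf ⊕ Fin ni) (Fin nf ⊕ Fin ni) ℝ)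
    (hPp : Pp = matIntIoi fun t => FJ t * B * Bᵀ * (FJ t)ᵀ)
    (Pimp : Matrix (Fin nf ⊕ Fin ni) (Fin nf ⊕ Fin ni) ℝ)
    (hPimp : Pimp = ∑ k ∈ Finset.range ν, FN k * B * Bᵀ * (FN k)ᵀ)
    -- reduced-order data
    {rf ri : ℕ}
    (A1r : Matrix (Fin rf) (Fin rf) ℝ) (E2r : Matrix (Fin ri) (Fin ri) ℝ) (hE2r : E2r ^ ν = 0)
    (Cr αr : ℝ) (hCr : 0 < Cr) (hαr : 0 < αr)
    (hA1r : ∀ t : ℝ, 0 ≤ t → opNorm (mexp (t • A1r)) ≤ Cr * Real.exp (-αr * t))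
    (Br : Matrix (Fin rf ⊕ Fin ri) (Fin m) ℝ)
    (Mr : Matrix (Fin rf ⊕ Fin ri) (Fin rf ⊕ Fin ri) ℝ) (hMr : Mr.IsSymm)
    (FJr : ℝ → Matrix (Fin rf ⊕ Fin ri) (Fin rf ⊕ Fin ri) ℝ)
    (hFJr : ∀ t : ℝ, FJr t = fromBlocks (mexp (t • A1r)) 0 0 0)
    (FNr : ℕ → Matrix (Fin rf ⊕ Fin ri) (Fin rf ⊕ Fin ri) ℝ)
    (hFNr : ∀ k : ℕ, FNr k = fromBlocks 0 0 0 (-(E2r ^ k)))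
    -- reduced-order matrices and projectors
    (Er Ar : Matrix (Fin rf ⊕ Fin ri) (Fin rf ⊕ Fin ri) ℝ)
    (hEr : Er = fromBlocks 1 0 0 E2r) (hAr : Ar = fromBlocks A1r 0 0 1)
    (Plr Prr : Matrix (Fin rf ⊕ Fin ri) (Fin rf ⊕ Fin ri) ℝ)
    (hPlr : Plr = fromBlocks 1 0 0 0) (hPrr : Prr = fromBlocks 1 0 0 0)
    -- the mixed improper Gramian
    (Pti : Matrix (Fin nf ⊕ Fin ni) (Fin rf ⊕ Fin ri) ℝ)
    (hPti : Pti = ∑ k ∈ Finset.range ν, FN k * B * Brᵀ * (FNr k)ᵀ) :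
    A * Pti * Arᵀ - E * Pti * Erᵀ = (1 - Pl) * B * Brᵀ * (1 - Plr)ᵀ ∧
      Pr * Pti * Prrᵀ = 0 := by

  have hTZ : ∀ Z : Matrix (Fin nf ⊕ Fin ni) (Fin nf ⊕ Fin ni) ℝ, T * (Tinv * Z) = Z := by
    intro Z; rw [← Matrix.mul_assoc, hT, Matrix.one_mul]
  -- block products
  have hAFN : ∀ k, A * FN k = W * fromBlocks 0 0 0 (-(N ^ k)) * Winv := by
    intro k
    rw [hA, hFN]
    simp only [Matrix.mul_assoc, hTZ]
    rw [← Matrix.mul_assoc (fromBlocks J 0 0 1) (fromBlocks 0 0 0 (-(N ^ k))) Winv]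
    simp [Matrix.fromBlocks_multiply]
  have hEFN : ∀ k, E * FN k = W * fromBlocks 0 0 0 (-(N ^ (k + 1))) * Winv := by
    intro k
    rw [hE, hFN]
    simp only [Matrix.mul_assoc, hTZ]
    rw [← Matrix.mul_assoc (fromBlocks 1 0 0 N) (fromBlocks 0 0 0 (-(N ^ k))) Winv]
    simp only [Matrix.fromBlocks_multiply, Matrix.mul_zero, Matrix.zero_mul,
      Matrix.one_mul, Matrix.mul_one, add_zero, zero_add, Matrix.mul_neg, neg_zero]
    rw [← pow_succ']
  have hArFNr : ∀ k, Ar * FNr k = FNr k := by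
    intro k
    rw [hAr, hFNr]
    simp [Matrix.fromBlocks_multiply]
  have hErFNr : ∀ k, Er * FNr k = FNr (k + 1) := by
    intro k
    rw [hEr, hFNr, hFNr]
    simp only [Matrix.fromBlocks_multiply, Matrix.mul_zero, Matrix.zero_mul,
      Matrix.one_mul, Matrix.mul_one, add_zero, zero_add, Matrix.mul_neg, neg_zero]
    rw [← pow_succ']
  set f : ℕ → Matrix (Fin nf ⊕ Fin ni) (Fin rf ⊕ Fin ri) ℝ := fun k =>
    W * fromBlocks 0 0 0 (-(N ^ k)) * Winv * B * Brᵀ * (FNr k)ᵀ with hf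
  have key : ∀ k, A * (FN k * B * Brᵀ * (FNr k)ᵀ) * Arᵀ
      - E * (FN k * B * Brᵀ * (FNr k)ᵀ) * Erᵀ = f k - f (k + 1) := by
    intro k
    have h1 : A * (FN k * B * Brᵀ * (FNr k)ᵀ) * Arᵀ = A * FN k * B * Brᵀ * (Ar * FNr k)ᵀ := by
      rw [Matrix.transpose_mul]
      simp only [Matrix.mul_assoc]
    have h2 : E * (FN k * B * Brᵀ * (FNr k)ᵀ) * Erᵀ = E * FN k * B * Brᵀ * (Er * FNr k)ᵀ := by
      rw [Matrix.transpose_mul]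
      simp only [Matrix.mul_assoc]
    rw [h1, h2, hAFN, hEFN, hArFNr, hErFNr, hf]
  constructor
  · have expand : A * Pti * Arᵀ - E * Pti * Erᵀ
        = ∑ k ∈ Finset.range ν, (f k - f (k + 1)) := by
      rw [hPti]
      simp only [Matrix.mul_sum, Matrix.sum_mul]
      rw [← Finset.sum_sub_distrib]
      exact Finset.sum_congr rfl fun k _ => key k
    rw [expand, Finset.sum_range_sub' f ν]
    have hfν : f ν = 0 := by
      simp [hf, hN]
    have hf0 : f 0 = (1 - Pl) * B * Brᵀ * (1 - Plr)ᵀ := by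
      have h1Pl : 1 - Pl = W * fromBlocks 0 0 0 1 * Winv := by
        rw [hPl]
        have : (1 : Matrix (Fin nf ⊕ Fin ni) (Fin nf ⊕ Fin ni) ℝ) = W * 1 * Winv := by
          rw [Matrix.mul_one, hW]
        rw [this]
        have h1 : (1 : Matrix (Fin nf ⊕ Fin ni) (Fin nf ⊕ Fin ni) ℝ)
            = fromBlocks 1 0 0 1 := by simp [Matrix.fromBlocks_one]
        rw [h1]
        rw [← Matrix.sub_mul, ← Matrix.mul_sub]
        congr 1
        congr 1
        ext (i | i) (j | j) <;> simp [Matrix.fromBlocks]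
      have h1Plr : 1 - Plr = fromBlocks 0 0 0 (1 : Matrix (Fin ri) (Fin ri) ℝ) := by
        rw [hPlr]
        have h1 : (1 : Matrix (Fin rf ⊕ Fin ri) (Fin rf ⊕ Fin ri) ℝ)
            = fromBlocks 1 0 0 1 := by simp [Matrix.fromBlocks_one]
        rw [h1]
        ext (i | i) (j | j) <;> simp [Matrix.fromBlocks]
      have hneg1 : (fromBlocks 0 0 0 (-1) : Matrix (Fin rf ⊕ Fin ri) (Fin rf ⊕ Fin ri) ℝ)
          = -(fromBlocks 0 0 0 1) := by
        ext (i | i) (j | j) <;> simp [Matrix.fromBlocks]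
      have hnegN : (fromBlocks 0 0 0 (-1) : Matrix (Fin nf ⊕ Fin ni) (Fin nf ⊕ Fin ni) ℝ)
          = -(fromBlocks 0 0 0 1) := by
        ext (i | i) (j | j) <;> simp [Matrix.fromBlocks]
      rw [hf, h1Pl, h1Plr]
      simp only [pow_zero, hFNr]
      rw [hneg1, hnegN]
      simp [Matrix.transpose_neg, Matrix.mul_neg, Matrix.neg_mul]
    rw [hfν, hf0, sub_zero]
  · have hPrFN : ∀ k, Pr * FN k = 0 := by
      intro k
      rw [hPr, hFN]
      simp only [Matrix.mul_assoc]
      have : T * (Tinv * (fromBlocks 0 0 0 (-(N ^ k)) * Winv))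
          = fromBlocks 0 0 0 (-(N ^ k)) * Winv := hTZ _
      rw [this, ← Matrix.mul_assoc (fromBlocks 1 0 0 0) (fromBlocks 0 0 0 (-(N ^ k))) Winv]
      simp [Matrix.fromBlocks_multiply]
    rw [hPti]
    simp only [Matrix.mul_sum, Matrix.sum_mul]
    apply Finset.sum_eq_zero
    intro k _
    have : Pr * (FN k * B * Brᵀ * (FNr k)ᵀ) = Pr * FN k * B * Brᵀ * (FNr k)ᵀ := by
      simp only [Matrix.mul_assoc]
    rw [this, hPrFN]
    simp
end

section
/- The improper-proper output error satisfies the bound sup_{t≥0} |y_ip(t) − ŷ_ip(t)| ≤ (trace(P_p·M·P_i·M) − 2·trace(P̃_p^T·M·P̃_i·M̂) + trace(P̂_p·M̂·P̂_i·M̂))^{1/2} · ν^{1/2} · ‖u‖_{C^{ν−1}} · ‖u‖_{L₂}, where P̃_p := ∫₀^∞ F_J(t)·B·B̂^T·F̂_J(t)^T dt and P̃_i := Σ_{k=0}^{ν−1} F_N(k)·B·B̂^T·F̂_N(k)^T. -/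
open MeasureTheory Matrix

/-! ### Auxiliary lemmas -/

lemma enormSq_nonneg' {ι : Type*} [Fintype ι] (v : ι → ℝ) : 0 ≤ enormSq v :=
  Finset.sum_nonneg fun _ _ => sq_nonneg _

lemma abs_dotv_le' {ι : Type*} [Fintype ι] (v w : ι → ℝ) :
    |dotv v w| ≤ Real.sqrt (enormSq v) * Real.sqrt (enormSq w) := by
  have h := Real.sum_mul_le_sqrt_mul_sqrt Finset.univ (fun i => |v i|) (fun i => |w i|)
  simp only [sq_abs] at h
  refine le_trans ?_ h
  calc |dotv v w| ≤ ∑ i, |v i * w i| := Finset.abs_sum_le_sum_abs _ _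
    _ = ∑ i, |v i| * |w i| := by simp [abs_mul]

lemma enormSq_kron' {m : ℕ} (a b : Fin m → ℝ) :
    enormSq (kron a b) = enormSq a * enormSq b := by
  simp [enormSq, kron, Fintype.sum_prod_type, mul_pow, ← Finset.sum_mul, ← Finset.mul_sum]

lemma dotv_sub_left' {ι : Type*} [Fintype ι] (v w x : ι → ℝ) :
    dotv (v - w) x = dotv v x - dotv w x := by
  simp [dotv, sub_mul, Finset.sum_sub_distrib]

lemma trace_mul_eq_sum {a b : Type*} [Fintype a] [Fintype b]
    (A : Matrix a b ℝ) (K : Matrix b a ℝ) :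
    Matrix.trace (A * K) = ∑ i, ∑ j, A i j * K j i := by
  simp [Matrix.trace, Matrix.diag, Matrix.mul_apply]

lemma matIntIoi_transpose {a b : Type*} (Q : ℝ → Matrix a b ℝ) :
    (matIntIoi Q)ᵀ = matIntIoi (fun s => (Q s)ᵀ) := rfl

lemma trace_matIntIoi_mul {a b : Type*} [Fintype a] [Fintype b]
    (Q : ℝ → Matrix a b ℝ)
    (hQ : ∀ i j, MeasureTheory.IntegrableOn (fun s => Q s i j) (Set.Ioi 0))
    (K : Matrix b a ℝ) :
    Matrix.trace (matIntIoi Q * K) = ∫ s in Set.Ioi (0:ℝ), Matrix.trace (Q s * K) := by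
  rw [trace_mul_eq_sum]
  have h : ∀ s, Matrix.trace (Q s * K) = ∑ i, ∑ j, Q s i j * K j i :=
    fun s => trace_mul_eq_sum _ _
  simp_rw [h]
  rw [MeasureTheory.integral_finset_sum]
  · refine Finset.sum_congr rfl fun i _ => ?_
    rw [MeasureTheory.integral_finset_sum]
    · refine Finset.sum_congr rfl fun j _ => ?_
      show (∫ s in Set.Ioi (0:ℝ), Q s i j) * K j i = _
      rw [← MeasureTheory.integral_mul_const]
    · exact fun j _ => (hQ i j).mul_const _
  · exact fun i _ => MeasureTheory.integrable_finset_sum _ fun j _ => (hQ i j).mul_const _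

lemma integrableOn_trace_mul {a b : Type*} [Fintype a] [Fintype b]
    (Q : ℝ → Matrix a b ℝ)
    (hQ : ∀ i j, MeasureTheory.IntegrableOn (fun s => Q s i j) (Set.Ioi 0))
    (K : Matrix b a ℝ) :
    MeasureTheory.IntegrableOn (fun s => Matrix.trace (Q s * K)) (Set.Ioi 0) := by
  have h : (fun s => Matrix.trace (Q s * K)) = fun s => ∑ i, ∑ j, Q s i j * K j i :=
    funext fun s => trace_mul_eq_sum _ _
  rw [h]
  exact MeasureTheory.integrable_finset_sum _ fun i _ =>
    MeasureTheory.integrable_finset_sum _ fun j _ => (hQ i j).mul_const _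

lemma enormSq_vecm_sub {m : ℕ} (X Y : Matrix (Fin m) (Fin m) ℝ) :
    enormSq (vecm X - vecm Y) =
      Matrix.trace (X * Xᵀ) - 2 * Matrix.trace (X * Yᵀ) + Matrix.trace (Y * Yᵀ) := by
  simp only [trace_mul_eq_sum, Matrix.transpose_apply, enormSq, vecm, Pi.sub_apply,
    Fintype.sum_prod_type, Finset.mul_sum, ← Finset.sum_sub_distrib, ← Finset.sum_add_distrib]
  refine Finset.sum_congr rfl fun i _ => ?_
  refine Finset.sum_congr rfl fun j _ => ?_
  ring

lemma abs_entry_le_opNorm {d e : ℕ} (X : Matrix (Fin d) (Fin e) ℝ) (i : Fin d) (j : Fin e) :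
    |X i j| ≤ opNorm X := by
  letI := Matrix.instL2OpNormedAddCommGroup (m := Fin d) (n := Fin e) (𝕜 := ℝ)
  have key : ∀ (v : EuclideanSpace ℝ (Fin d)) (i : Fin d), |v i| ≤ ‖v‖ := by
    intro v i
    rw [EuclideanSpace.norm_eq]
    have h1 : |v i| = Real.sqrt (‖v i‖ ^ 2) := by
      rw [Real.norm_eq_abs, Real.sqrt_sq_eq_abs, abs_abs]
    rw [h1]
    apply Real.sqrt_le_sqrt
    exact Finset.single_le_sum (f := fun k => ‖v k‖ ^ 2) (fun k _ => by positivity)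
      (Finset.mem_univ i)
  have h := X.l2_opNorm_mulVec (EuclideanSpace.single j (1:ℝ))
  rw [EuclideanSpace.norm_single] at h
  simp only [norm_one, mul_one] at h
  have hv : ((EuclideanSpace.equiv (Fin d) ℝ).symm <| X *ᵥ (EuclideanSpace.single j (1:ℝ))) i
      = X i j := by
    show (X *ᵥ _) i = X i j
    simp [Matrix.mulVec, dotProduct, EuclideanSpace.single_apply, mul_ite]
  calc |X i j| = |((EuclideanSpace.equiv (Fin d) ℝ).symm <|
        X *ᵥ (EuclideanSpace.single j (1:ℝ))) i| := by rw [hv]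
    _ ≤ ‖(EuclideanSpace.equiv (Fin d) ℝ).symm <| X *ᵥ (EuclideanSpace.single j (1:ℝ))‖ := key _ i
    _ ≤ ‖X‖ := h

lemma continuous_mexp_smul {d : ℕ} (J : Matrix (Fin d) (Fin d) ℝ) :
    Continuous fun t : ℝ => mexp (t • J) := by
  letI : NormedRing (Matrix (Fin d) (Fin d) ℝ) := Matrix.linftyOpNormedRing
  letI : NormedAlgebra ℝ (Matrix (Fin d) (Fin d) ℝ) := Matrix.linftyOpNormedAlgebra
  letI : NormedAlgebra ℚ (Matrix (Fin d) (Fin d) ℝ) := Matrix.linftyOpNormedAlgebra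
  exact (NormedSpace.exp_continuous (𝔸 := Matrix (Fin d) (Fin d) ℝ)).comp (continuous_id.smul continuous_const)

lemma fromBlocks_entry_abs_le {df di : ℕ} (X : Matrix (Fin df) (Fin df) ℝ) {c : ℝ}
    (hc : 0 ≤ c) (hX : opNorm X ≤ c) (a b : Fin df ⊕ Fin di) :
    |(fromBlocks X 0 0 0 : Matrix (Fin df ⊕ Fin di) (Fin df ⊕ Fin di) ℝ) a b| ≤ c := by
  cases a with
  | inl a => cases b with
    | inl b => exact le_trans (abs_entry_le_opNorm X a b) hX
    | inr b => simpa [fromBlocks] using hc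
  | inr a => cases b with
    | inl b => simpa [fromBlocks] using hc
    | inr b => simpa [fromBlocks] using hc

lemma entry_bound_conj {ι κ : Type*} [Fintype ι] [Fintype κ] {df di : ℕ}
    (L : Matrix ι (Fin df ⊕ Fin di) ℝ) (R : Matrix (Fin df ⊕ Fin di) κ ℝ)
    (X : Matrix (Fin df) (Fin df) ℝ) {c : ℝ} (hc : 0 ≤ c) (hX : opNorm X ≤ c)
    (i : ι) (j : κ) :
    |(L * (fromBlocks X 0 0 0 : Matrix (Fin df ⊕ Fin di) (Fin df ⊕ Fin di) ℝ) * R) i j| ≤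
      (∑ i', ∑ a, |L i' a|) * (∑ b, ∑ j', |R b j'|) * c := by
  have hentry : (L * (fromBlocks X 0 0 0 : Matrix (Fin df ⊕ Fin di) (Fin df ⊕ Fin di) ℝ) * R) i j
      = ∑ b, (∑ a, L i a * (fromBlocks X 0 0 0 :
          Matrix (Fin df ⊕ Fin di) (Fin df ⊕ Fin di) ℝ) a b) * R b j := by
    simp [Matrix.mul_apply]
  rw [hentry]
  calc |∑ b, (∑ a, L i a * (fromBlocks X 0 0 0 :
          Matrix (Fin df ⊕ Fin di) (Fin df ⊕ Fin di) ℝ) a b) * R b j|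
      ≤ ∑ b, |(∑ a, L i a * (fromBlocks X 0 0 0 :
          Matrix (Fin df ⊕ Fin di) (Fin df ⊕ Fin di) ℝ) a b) * R b j| :=
        Finset.abs_sum_le_sum_abs _ _
    _ ≤ ∑ b, (∑ a, |L i a| * c) * |R b j| := by
        refine Finset.sum_le_sum fun b _ => ?_
        rw [abs_mul]
        refine mul_le_mul_of_nonneg_right ?_ (abs_nonneg _)
        refine le_trans (Finset.abs_sum_le_sum_abs _ _) (Finset.sum_le_sum fun a _ => ?_)
        rw [abs_mul]
        exact mul_le_mul_of_nonneg_left (fromBlocks_entry_abs_le X hc hX a b) (abs_nonneg _)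
    _ = (∑ a, |L i a|) * c * ∑ b, |R b j| := by rw [← Finset.sum_mul, Finset.mul_sum]
    _ ≤ (∑ i', ∑ a, |L i' a|) * (∑ b, ∑ j', |R b j'|) * c := by
        have h1 : (∑ a, |L i a|) ≤ ∑ i', ∑ a, |L i' a| :=
          Finset.single_le_sum (f := fun i' => ∑ a, |L i' a|)
            (fun _ _ => Finset.sum_nonneg fun _ _ => abs_nonneg _) (Finset.mem_univ i)
        have h2 : (∑ b, |R b j|) ≤ ∑ b, ∑ j', |R b j'| :=
          Finset.sum_le_sum fun b _ => Finset.single_le_sum (f := fun j' => |R b j'|)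
            (fun _ _ => abs_nonneg _) (Finset.mem_univ j)
        have hL : (0:ℝ) ≤ ∑ a, |L i a| := Finset.sum_nonneg fun _ _ => abs_nonneg _
        have hR : (0:ℝ) ≤ ∑ b, |R b j| := Finset.sum_nonneg fun _ _ => abs_nonneg _
        calc (∑ a, |L i a|) * c * ∑ b, |R b j|
            = (∑ a, |L i a|) * (∑ b, |R b j|) * c := by ring
          _ ≤ (∑ i', ∑ a, |L i' a|) * (∑ b, ∑ j', |R b j'|) * c := by
              apply mul_le_mul_of_nonneg_right _ hc
              exact mul_le_mul h1 h2 hR (le_trans hL h1)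

lemma prod_entry_bound {ι κ σ τ : Type*} [Fintype σ] [Fintype τ]
    (F1 : Matrix ι σ ℝ) (G : Matrix σ τ ℝ) (F2 : Matrix κ τ ℝ)
    {c1 c2 : ℝ} (hc1 : 0 ≤ c1) (h1 : ∀ i p, |F1 i p| ≤ c1) (h2 : ∀ j q, |F2 j q| ≤ c2)
    (i : ι) (j : κ) :
    |(F1 * G * F2ᵀ) i j| ≤ c1 * c2 * (∑ p, ∑ q, |G p q|) := by
  have hentry : (F1 * G * F2ᵀ) i j = ∑ q, (∑ p, F1 i p * G p q) * F2 j q := by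
    simp [Matrix.mul_apply, Matrix.transpose_apply]
  rw [hentry]
  calc |∑ q, (∑ p, F1 i p * G p q) * F2 j q|
      ≤ ∑ q, ∑ p, |F1 i p| * |G p q| * |F2 j q| := by
        refine le_trans (Finset.abs_sum_le_sum_abs _ _) (Finset.sum_le_sum fun q _ => ?_)
        rw [abs_mul, ← Finset.sum_mul]
        refine mul_le_mul_of_nonneg_right ?_ (abs_nonneg _)
        refine le_trans (Finset.abs_sum_le_sum_abs _ _) (le_of_eq ?_)
        simp [abs_mul]
    _ ≤ ∑ q, ∑ p, c1 * c2 * |G p q| := by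
        refine Finset.sum_le_sum fun q _ => Finset.sum_le_sum fun p _ => ?_
        calc |F1 i p| * |G p q| * |F2 j q| = |F1 i p| * |F2 j q| * |G p q| := by ring
          _ ≤ c1 * c2 * |G p q| := by
              apply mul_le_mul_of_nonneg_right _ (abs_nonneg _)
              exact mul_le_mul (h1 i p) (h2 j q) (abs_nonneg _) hc1
    _ = c1 * c2 * (∑ p, ∑ q, |G p q|) := by
        rw [Finset.mul_sum, Finset.sum_comm]
        exact Finset.sum_congr rfl fun q _ => by rw [Finset.mul_sum]

lemma integrableOn_of_expbound (f : ℝ → ℝ) (hf : Continuous f) {K β : ℝ} (hβ : 0 < β)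
    (h : ∀ s : ℝ, 0 ≤ s → |f s| ≤ K * Real.exp (-β * s)) :
    MeasureTheory.IntegrableOn f (Set.Ioi 0) := by
  refine MeasureTheory.Integrable.mono' ((exp_neg_integrableOn_Ioi 0 hβ).const_mul K)
    hf.aestronglyMeasurable ?_
  refine (MeasureTheory.ae_restrict_iff' measurableSet_Ioi).2 (Filter.Eventually.of_forall ?_)
  intro s hs
  simpa [Real.norm_eq_abs] using h s (le_of_lt hs)

lemma integrableOn_entries_conjprod {ι κ σ τ : Type*} [Fintype ι] [Fintype κ] [Fintype σ]
    [Fintype τ] (F1 : ℝ → Matrix ι σ ℝ) (G : Matrix σ τ ℝ) (F2 : ℝ → Matrix κ τ ℝ)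
    (hc1 : Continuous F1) (hc2 : Continuous F2)
    {K1 K2 a1 a2 : ℝ} (hK1 : 0 ≤ K1) (hK2 : 0 ≤ K2) (ha1 : 0 < a1) (ha2 : 0 < a2)
    (hb1 : ∀ s : ℝ, 0 ≤ s → ∀ i p, |F1 s i p| ≤ K1 * Real.exp (-a1 * s))
    (hb2 : ∀ s : ℝ, 0 ≤ s → ∀ j q, |F2 s j q| ≤ K2 * Real.exp (-a2 * s)) :
    ∀ (i : ι) (j : κ),
      MeasureTheory.IntegrableOn (fun s => (F1 s * G * (F2 s)ᵀ) i j) (Set.Ioi 0) := by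
  intro i j
  refine integrableOn_of_expbound _
    (((hc1.matrix_mul continuous_const).matrix_mul hc2.matrix_transpose).matrix_elem i j)
    (add_pos ha1 ha2) (K := K1 * K2 * (∑ p, ∑ q, |G p q|)) ?_
  intro s hs
  have h := prod_entry_bound (F1 s) G (F2 s)
    (c1 := K1 * Real.exp (-a1 * s)) (c2 := K2 * Real.exp (-a2 * s))
    (by positivity) (hb1 s hs) (hb2 s hs) i j
  refine le_trans h (le_of_eq ?_)
  rw [show -(a1 + a2) * s = -a1 * s + -a2 * s by ring, Real.exp_add]
  ring

/-- The improper-proper output error satisfies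
`sup_{t≥0} |y_ip(t) − ŷ_ip(t)| ≤
  (trace(P_p·M·P_i·M) − 2·trace(P̃_pᵀ·M·P̃_i·M̂) + trace(P̂_p·M̂·P̂_i·M̂))^{1/2} · ν^{1/2} ·
  ‖u‖_{C^{ν−1}} · ‖u‖_{L₂}`. -/
theorem improper_proper_output_error_trace_bound
    {nf ni m : ℕ} (hm : 0 < m) (ν : ℕ) (hν : 0 < ν)
    -- Weierstraß canonical form data for the full-order system
    (W T Winv Tinv : Matrix (Fin nf ⊕ Fin ni) (Fin nf ⊕ Fin ni) ℝ)
    (hW : W * Winv = 1) (hW' : Winv * W = 1)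
    (hT : T * Tinv = 1) (hT' : Tinv * T = 1)
    (J : Matrix (Fin nf) (Fin nf) ℝ) (N : Matrix (Fin ni) (Fin ni) ℝ) (hN : N ^ ν = 0)
    (C α : ℝ) (hC : 0 < C) (hα : 0 < α)
    (hJ : ∀ t : ℝ, 0 ≤ t → opNorm (mexp (t • J)) ≤ C * Real.exp (-α * t))
    (E A : Matrix (Fin nf ⊕ Fin ni) (Fin nf ⊕ Fin ni) ℝ)
    (hE : E = W * fromBlocks 1 0 0 N * T)
    (hA : A = W * fromBlocks J 0 0 1 * T)
    (B : Matrix (Fin nf ⊕ Fin ni) (Fin m) ℝ)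
    (M : Matrix (Fin nf ⊕ Fin ni) (Fin nf ⊕ Fin ni) ℝ) (hM : M.IsSymm)
    -- spectral projectors
    (Pr Pl : Matrix (Fin nf ⊕ Fin ni) (Fin nf ⊕ Fin ni) ℝ)
    (hPr : Pr = Tinv * fromBlocks 1 0 0 0 * T)
    (hPl : Pl = W * fromBlocks 1 0 0 0 * Winv)
    -- fundamental solution matrices
    (FJ : ℝ → Matrix (Fin nf ⊕ Fin ni) (Fin nf ⊕ Fin ni) ℝ)
    (hFJ : ∀ t : ℝ, FJ t = Tinv * fromBlocks (mexp (t • J)) 0 0 0 * Winv)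
    (FN : ℕ → Matrix (Fin nf ⊕ Fin ni) (Fin nf ⊕ Fin ni) ℝ)
    (hFN : ∀ k : ℕ, FN k = Tinv * fromBlocks 0 0 0 (-(N ^ k)) * Winv)
    -- proper and improper controllability Gramians
    (Pp : Matrix (Fin nf ⊕ Fin ni) (Fin nf ⊕ Fin ni) ℝ)
    (hPp : Pp = matIntIoi fun t => FJ t * B * Bᵀ * (FJ t)ᵀ)
    (Pimp : Matrix (Fin nf ⊕ Fin ni) (Fin nf ⊕ Fin ni) ℝ)
    (hPimp : Pimp = ∑ k ∈ Finset.range ν, FN k * B * Bᵀ * (FN k)ᵀ)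
    -- reduced-order data
    {rf ri : ℕ}
    (A1r : Matrix (Fin rf) (Fin rf) ℝ) (E2r : Matrix (Fin ri) (Fin ri) ℝ) (hE2r : E2r ^ ν = 0)
    (Cr αr : ℝ) (hCr : 0 < Cr) (hαr : 0 < αr)
    (hA1r : ∀ t : ℝ, 0 ≤ t → opNorm (mexp (t • A1r)) ≤ Cr * Real.exp (-αr * t))
    (Br : Matrix (Fin rf ⊕ Fin ri) (Fin m) ℝ)
    (Mr : Matrix (Fin rf ⊕ Fin ri) (Fin rf ⊕ Fin ri) ℝ) (hMr : Mr.IsSymm)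
    (FJr : ℝ → Matrix (Fin rf ⊕ Fin ri) (Fin rf ⊕ Fin ri) ℝ)
    (hFJr : ∀ t : ℝ, FJr t = fromBlocks (mexp (t • A1r)) 0 0 0)
    (FNr : ℕ → Matrix (Fin rf ⊕ Fin ri) (Fin rf ⊕ Fin ri) ℝ)
    (hFNr : ∀ k : ℕ, FNr k = fromBlocks 0 0 0 (-(E2r ^ k)))
    -- improper-proper kernels of the full-order and reduced-order systems
    (hip : ℝ → ℕ → Fin m × Fin m → ℝ)
    (hhip : ∀ (t : ℝ) (k : ℕ), hip t k = vecm (Bᵀ * (FN k)ᵀ * M * FJ t * B))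
    (hipr : ℝ → ℕ → Fin m × Fin m → ℝ)
    (hhipr : ∀ (t : ℝ) (k : ℕ), hipr t k = vecm (Brᵀ * (FNr k)ᵀ * Mr * FJr t * Br))
    -- a (ν−1)-times continuously differentiable, square-integrable input with bounded
    -- derivatives
    (u : ℝ → Fin m → ℝ) (hu : ContDiff ℝ ((ν - 1 : ℕ) : ℕ∞) u)
    (husq : MeasureTheory.IntegrableOn (fun τ => enormSq (u τ)) (Set.Ioi 0))
    (hubd : ∀ k < ν, ∃ c : ℝ, ∀ t : ℝ, 0 ≤ t → Real.sqrt (enormSq (iteratedDeriv k u t)) ≤ c)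
    -- improper-proper outputs of the full-order and reduced-order systems
    (yip yipr : ℝ → ℝ)
    (hyip : ∀ t : ℝ, yip t = ∫ τ in Set.Ioc (0:ℝ) t,
      ∑ k ∈ Finset.range ν, dotv (hip (t - τ) k) (kron (u τ) (iteratedDeriv k u t)))
    (hyipr : ∀ t : ℝ, yipr t = ∫ τ in Set.Ioc (0:ℝ) t,
      ∑ k ∈ Finset.range ν, dotv (hipr (t - τ) k) (kron (u τ) (iteratedDeriv k u t)))
    -- the C^{ν−1}-norm and the L₂-norm of u
    (uC : ℝ)
    (huC : uC = ⨆ k : Fin ν, ⨆ t : {s : ℝ // 0 ≤ s},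
      Real.sqrt (enormSq (iteratedDeriv k.1 u t.1)))
    (uL2 : ℝ) (huL2 : uL2 = Real.sqrt (∫ τ in Set.Ioi (0:ℝ), enormSq (u τ)))
    -- the reduced proper and improper Gramians
    (Ppr : Matrix (Fin rf ⊕ Fin ri) (Fin rf ⊕ Fin ri) ℝ)
    (hPpr : Ppr = matIntIoi fun t => FJr t * Br * Brᵀ * (FJr t)ᵀ)
    (Pimpr : Matrix (Fin rf ⊕ Fin ri) (Fin rf ⊕ Fin ri) ℝ)
    (hPimpr : Pimpr = ∑ k ∈ Finset.range ν, FNr k * Br * Brᵀ * (FNr k)ᵀ)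
    -- the mixed proper and improper Gramians
    (Ptp : Matrix (Fin nf ⊕ Fin ni) (Fin rf ⊕ Fin ri) ℝ)
    (hPtp : Ptp = matIntIoi fun t => FJ t * B * Brᵀ * (FJr t)ᵀ)
    (Pti : Matrix (Fin nf ⊕ Fin ni) (Fin rf ⊕ Fin ri) ℝ)
    (hPti : Pti = ∑ k ∈ Finset.range ν, FN k * B * Brᵀ * (FNr k)ᵀ)
    :
    ∀ t : ℝ, 0 ≤ t → |yip t - yipr t| ≤
      Real.sqrt (Matrix.trace (Pp * M * Pimp * M) - 2 * Matrix.trace (Ptpᵀ * M * Pti * Mr) +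
        Matrix.trace (Ppr * Mr * Pimpr * Mr)) * Real.sqrt (ν : ℝ) * uC * uL2 := by
  have hM' : Mᵀ = M := hM
  have hMr' : Mrᵀ = Mr := hMr
  -- continuity of the fundamental matrices
  have hFJc : Continuous FJ := by
    have h : FJ = fun s => Tinv * fromBlocks (mexp (s • J)) 0 0 0 * Winv := funext hFJ
    rw [h]
    exact (continuous_const.matrix_mul
      ((continuous_mexp_smul J).matrix_fromBlocks continuous_const continuous_const
        continuous_const)).matrix_mul continuous_const
  have hFJrc : Continuous FJr := by
    have h : FJr = fun s => fromBlocks (mexp (s • A1r)) 0 0 0 := funext hFJr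
    rw [h]
    exact (continuous_mexp_smul A1r).matrix_fromBlocks continuous_const continuous_const
      continuous_const
  -- entrywise exponential decay bounds
  obtain ⟨K1, hK1, hFJbd⟩ : ∃ K1 : ℝ, 0 ≤ K1 ∧ ∀ s : ℝ, 0 ≤ s →
      ∀ i j, |FJ s i j| ≤ K1 * Real.exp (-α * s) := by
    refine ⟨(∑ i', ∑ a, |Tinv i' a|) * (∑ b, ∑ j', |Winv b j'|) * C, by positivity, ?_⟩
    intro s hs i j
    rw [hFJ]
    have h := entry_bound_conj Tinv Winv (mexp (s • J))
      (c := C * Real.exp (-α * s)) (by positivity) (hJ s hs) i j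
    refine le_trans h (le_of_eq (by ring))
  obtain ⟨K2, hK2, hFJrbd⟩ : ∃ K2 : ℝ, 0 ≤ K2 ∧ ∀ s : ℝ, 0 ≤ s →
      ∀ i j, |FJr s i j| ≤ K2 * Real.exp (-αr * s) := by
    refine ⟨(∑ i', ∑ a, |(1 : Matrix (Fin rf ⊕ Fin ri) (Fin rf ⊕ Fin ri) ℝ) i' a|) *
      (∑ b, ∑ j', |(1 : Matrix (Fin rf ⊕ Fin ri) (Fin rf ⊕ Fin ri) ℝ) b j'|) * Cr,
      by positivity, ?_⟩
    intro s hs i j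
    have hone : FJr s = 1 * fromBlocks (mexp (s • A1r)) 0 0 0 * 1 := by
      rw [hFJr, Matrix.one_mul, Matrix.mul_one]
    rw [hone]
    have h := entry_bound_conj (1 : Matrix (Fin rf ⊕ Fin ri) (Fin rf ⊕ Fin ri) ℝ)
      (1 : Matrix (Fin rf ⊕ Fin ri) (Fin rf ⊕ Fin ri) ℝ) (mexp (s • A1r))
      (c := Cr * Real.exp (-αr * s)) (by positivity) (hA1r s hs) i j
    refine le_trans h (le_of_eq (by ring))
  -- entrywise integrability of the three quadratic kernels
  have hQint : ∀ i j, MeasureTheory.IntegrableOn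
      (fun s => (FJ s * (B * Bᵀ) * (FJ s)ᵀ) i j) (Set.Ioi 0) :=
    integrableOn_entries_conjprod FJ (B * Bᵀ) FJ hFJc hFJc hK1 hK1 hα hα hFJbd hFJbd
  have hQmint : ∀ i j, MeasureTheory.IntegrableOn
      (fun s => (FJ s * (B * Brᵀ) * (FJr s)ᵀ) i j) (Set.Ioi 0) :=
    integrableOn_entries_conjprod FJ (B * Brᵀ) FJr hFJc hFJrc hK1 hK2 hα hαr hFJbd hFJrbd
  have hQrint : ∀ i j, MeasureTheory.IntegrableOn
      (fun s => (FJr s * (Br * Brᵀ) * (FJr s)ᵀ) i j) (Set.Ioi 0) :=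
    integrableOn_entries_conjprod FJr (Br * Brᵀ) FJr hFJrc hFJrc hK2 hK2 hαr hαr hFJrbd hFJrbd
  -- the pointwise algebraic identity
  have key : ∀ (s : ℝ) (k : ℕ),
      enormSq (hip s k - hipr s k) =
        Matrix.trace ((FJ s * (B * Bᵀ) * (FJ s)ᵀ) * (M * ((FN k * B * Bᵀ * (FN k)ᵀ) * M)))
        - 2 * Matrix.trace ((FJ s * (B * Brᵀ) * (FJr s)ᵀ)ᵀ *
            (M * ((FN k * B * Brᵀ * (FNr k)ᵀ) * Mr)))
        + Matrix.trace ((FJr s * (Br * Brᵀ) * (FJr s)ᵀ) *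
            (Mr * ((FNr k * Br * Brᵀ * (FNr k)ᵀ) * Mr))) := by
    intro s k
    rw [hhip, hhipr, enormSq_vecm_sub]
    congr 1
    · congr 1
      · rw [show (Bᵀ * (FN k)ᵀ * M * FJ s * B) * (Bᵀ * (FN k)ᵀ * M * FJ s * B)ᵀ
            = (Bᵀ * ((FN k)ᵀ * M)) *
              (FJ s * (B * (Bᵀ * ((FJ s)ᵀ * (M * (FN k * B)))))) from by
          simp only [Matrix.transpose_mul, Matrix.transpose_transpose, hM']
          simp only [Matrix.mul_assoc]]
        rw [Matrix.trace_mul_comm]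
        simp only [Matrix.mul_assoc]
      · congr 1
        have hR : Matrix.trace ((FJ s * (B * Brᵀ) * (FJr s)ᵀ)ᵀ *
              (M * ((FN k * B * Brᵀ * (FNr k)ᵀ) * Mr)))
            = Matrix.trace ((Mr * (FNr k * Br)) *
              (Bᵀ * ((FN k)ᵀ * (M * (FJ s * (B * (Brᵀ * (FJr s)ᵀ))))))) := by
          rw [← Matrix.trace_transpose]
          simp only [Matrix.transpose_mul, Matrix.transpose_transpose, hM', hMr']
          simp only [Matrix.mul_assoc]
        rw [hR]
        rw [show (Bᵀ * (FN k)ᵀ * M * FJ s * B) * (Brᵀ * (FNr k)ᵀ * Mr * FJr s * Br)ᵀ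
            = (Bᵀ * ((FN k)ᵀ * (M * (FJ s * (B * (Brᵀ * (FJr s)ᵀ)))))) *
              (Mr * (FNr k * Br)) from by
          simp only [Matrix.transpose_mul, Matrix.transpose_transpose, hMr']
          simp only [Matrix.mul_assoc]]
        rw [Matrix.trace_mul_comm]
    · rw [show (Brᵀ * (FNr k)ᵀ * Mr * FJr s * Br) * (Brᵀ * (FNr k)ᵀ * Mr * FJr s * Br)ᵀ
          = (Brᵀ * ((FNr k)ᵀ * Mr)) *
            (FJr s * (Br * (Brᵀ * ((FJr s)ᵀ * (Mr * (FNr k * Br)))))) from by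
        simp only [Matrix.transpose_mul, Matrix.transpose_transpose, hMr']
        simp only [Matrix.mul_assoc]]
      rw [Matrix.trace_mul_comm]
      simp only [Matrix.mul_assoc]
  -- summed identity
  have hsum : ∀ s : ℝ, (∑ k ∈ Finset.range ν, enormSq (hip s k - hipr s k)) =
      Matrix.trace ((FJ s * (B * Bᵀ) * (FJ s)ᵀ) * (M * (Pimp * M)))
      - 2 * Matrix.trace ((FJ s * (B * Brᵀ) * (FJr s)ᵀ)ᵀ * (M * (Pti * Mr)))
      + Matrix.trace ((FJr s * (Br * Brᵀ) * (FJr s)ᵀ) * (Mr * (Pimpr * Mr))) := by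
    intro s
    calc (∑ k ∈ Finset.range ν, enormSq (hip s k - hipr s k))
        = ∑ k ∈ Finset.range ν,
          (Matrix.trace ((FJ s * (B * Bᵀ) * (FJ s)ᵀ) * (M * ((FN k * B * Bᵀ * (FN k)ᵀ) * M)))
          - 2 * Matrix.trace ((FJ s * (B * Brᵀ) * (FJr s)ᵀ)ᵀ *
              (M * ((FN k * B * Brᵀ * (FNr k)ᵀ) * Mr)))
          + Matrix.trace ((FJr s * (Br * Brᵀ) * (FJr s)ᵀ) *
              (Mr * ((FNr k * Br * Brᵀ * (FNr k)ᵀ) * Mr)))) :=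
          Finset.sum_congr rfl fun k _ => key s k
      _ = (∑ k ∈ Finset.range ν, Matrix.trace ((FJ s * (B * Bᵀ) * (FJ s)ᵀ) *
              (M * ((FN k * B * Bᵀ * (FN k)ᵀ) * M))))
          - 2 * (∑ k ∈ Finset.range ν, Matrix.trace ((FJ s * (B * Brᵀ) * (FJr s)ᵀ)ᵀ *
              (M * ((FN k * B * Brᵀ * (FNr k)ᵀ) * Mr))))
          + ∑ k ∈ Finset.range ν, Matrix.trace ((FJr s * (Br * Brᵀ) * (FJr s)ᵀ) *
              (Mr * ((FNr k * Br * Brᵀ * (FNr k)ᵀ) * Mr))) := by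
          rw [Finset.sum_add_distrib, Finset.sum_sub_distrib, Finset.mul_sum]
      _ = Matrix.trace ((FJ s * (B * Bᵀ) * (FJ s)ᵀ) * (M * (Pimp * M)))
          - 2 * Matrix.trace ((FJ s * (B * Brᵀ) * (FJr s)ᵀ)ᵀ * (M * (Pti * Mr)))
          + Matrix.trace ((FJr s * (Br * Brᵀ) * (FJr s)ᵀ) * (Mr * (Pimpr * Mr))) := by
          rw [hPimp, hPti, hPimpr]
          simp only [Matrix.sum_mul, Matrix.mul_sum, Matrix.trace_sum, Finset.mul_sum]
  -- integrability of the summand functions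
  have hf1int : MeasureTheory.IntegrableOn (fun s => Matrix.trace ((FJ s * (B * Bᵀ) *
      (FJ s)ᵀ) * (M * (Pimp * M)))) (Set.Ioi 0) :=
    integrableOn_trace_mul _ hQint _
  have hf2int : MeasureTheory.IntegrableOn (fun s => Matrix.trace ((FJ s * (B * Brᵀ) *
      (FJr s)ᵀ)ᵀ * (M * (Pti * Mr)))) (Set.Ioi 0) :=
    integrableOn_trace_mul _ (fun i j => hQmint j i) _
  have hf3int : MeasureTheory.IntegrableOn (fun s => Matrix.trace ((FJr s * (Br * Brᵀ) *
      (FJr s)ᵀ) * (Mr * (Pimpr * Mr)))) (Set.Ioi 0) :=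
    integrableOn_trace_mul _ hQrint _
  have hDint : MeasureTheory.IntegrableOn
      (fun s => ∑ k ∈ Finset.range ν, enormSq (hip s k - hipr s k)) (Set.Ioi 0) := by
    have h : (fun s => ∑ k ∈ Finset.range ν, enormSq (hip s k - hipr s k)) =
        fun s => Matrix.trace ((FJ s * (B * Bᵀ) * (FJ s)ᵀ) * (M * (Pimp * M)))
          - 2 * Matrix.trace ((FJ s * (B * Brᵀ) * (FJr s)ᵀ)ᵀ * (M * (Pti * Mr)))
          + Matrix.trace ((FJr s * (Br * Brᵀ) * (FJr s)ᵀ) * (Mr * (Pimpr * Mr))) :=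
      funext hsum
    rw [h]
    exact (hf1int.sub (hf2int.const_mul 2)).add hf3int
  -- the trace expression equals the integral of the squared kernel error
  have e1 : Matrix.trace (Pp * M * Pimp * M)
      = ∫ s in Set.Ioi (0:ℝ),
          Matrix.trace ((FJ s * (B * Bᵀ) * (FJ s)ᵀ) * (M * (Pimp * M))) := by
    have hPp' : Pp = matIntIoi (fun s => FJ s * (B * Bᵀ) * (FJ s)ᵀ) := by
      rw [hPp, show (fun t => FJ t * B * Bᵀ * (FJ t)ᵀ) = fun s => FJ s * (B * Bᵀ) * (FJ s)ᵀ
        from funext fun s => by rw [Matrix.mul_assoc (FJ s) B Bᵀ]]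
    rw [show Pp * M * Pimp * M = Pp * (M * (Pimp * M)) from by simp only [Matrix.mul_assoc],
      hPp']
    exact trace_matIntIoi_mul _ hQint _
  have e2 : Matrix.trace (Ptpᵀ * M * Pti * Mr)
      = ∫ s in Set.Ioi (0:ℝ),
          Matrix.trace ((FJ s * (B * Brᵀ) * (FJr s)ᵀ)ᵀ * (M * (Pti * Mr))) := by
    have hPtp' : Ptp = matIntIoi (fun s => FJ s * (B * Brᵀ) * (FJr s)ᵀ) := by
      rw [hPtp, show (fun t => FJ t * B * Brᵀ * (FJr t)ᵀ) = fun s => FJ s * (B * Brᵀ) * (FJr s)ᵀ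
        from funext fun s => by rw [Matrix.mul_assoc (FJ s) B Brᵀ]]
    rw [show Ptpᵀ * M * Pti * Mr = Ptpᵀ * (M * (Pti * Mr)) from by simp only [Matrix.mul_assoc],
      hPtp', matIntIoi_transpose]
    exact trace_matIntIoi_mul _ (fun i j => hQmint j i) _
  have e3 : Matrix.trace (Ppr * Mr * Pimpr * Mr)
      = ∫ s in Set.Ioi (0:ℝ),
          Matrix.trace ((FJr s * (Br * Brᵀ) * (FJr s)ᵀ) * (Mr * (Pimpr * Mr))) := by
    have hPpr' : Ppr = matIntIoi (fun s => FJr s * (Br * Brᵀ) * (FJr s)ᵀ) := by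
      rw [hPpr, show (fun t => FJr t * Br * Brᵀ * (FJr t)ᵀ) = fun s => FJr s * (Br * Brᵀ) * (FJr s)ᵀ
        from funext fun s => by rw [Matrix.mul_assoc (FJr s) Br Brᵀ]]
    rw [show Ppr * Mr * Pimpr * Mr = Ppr * (Mr * (Pimpr * Mr)) from by
      simp only [Matrix.mul_assoc], hPpr']
    exact trace_matIntIoi_mul _ hQrint _
  have hTR : Matrix.trace (Pp * M * Pimp * M) - 2 * Matrix.trace (Ptpᵀ * M * Pti * Mr) +
      Matrix.trace (Ppr * Mr * Pimpr * Mr)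
      = ∫ s in Set.Ioi (0:ℝ), ∑ k ∈ Finset.range ν, enormSq (hip s k - hipr s k) := by
    rw [show (∫ s in Set.Ioi (0:ℝ), ∑ k ∈ Finset.range ν, enormSq (hip s k - hipr s k))
        = ∫ s in Set.Ioi (0:ℝ),
          (Matrix.trace ((FJ s * (B * Bᵀ) * (FJ s)ᵀ) * (M * (Pimp * M)))
          - 2 * Matrix.trace ((FJ s * (B * Brᵀ) * (FJr s)ᵀ)ᵀ * (M * (Pti * Mr)))
          + Matrix.trace ((FJr s * (Br * Brᵀ) * (FJr s)ᵀ) * (Mr * (Pimpr * Mr)))) from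
      MeasureTheory.integral_congr_ae (Filter.Eventually.of_forall fun s => hsum s)]
    have hf2' : MeasureTheory.Integrable (fun s => 2 * Matrix.trace ((FJ s * (B * Brᵀ) *
        (FJr s)ᵀ)ᵀ * (M * (Pti * Mr)))) (MeasureTheory.volume.restrict (Set.Ioi 0)) :=
      hf2int.const_mul 2
    have hf12 : MeasureTheory.Integrable (fun s =>
        Matrix.trace ((FJ s * (B * Bᵀ) * (FJ s)ᵀ) * (M * (Pimp * M)))
        - 2 * Matrix.trace ((FJ s * (B * Brᵀ) * (FJr s)ᵀ)ᵀ * (M * (Pti * Mr))))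
        (MeasureTheory.volume.restrict (Set.Ioi 0)) := hf1int.sub hf2'
    rw [MeasureTheory.integral_add hf12 hf3int]
    rw [MeasureTheory.integral_sub hf1int hf2']
    rw [MeasureTheory.integral_const_mul]
    rw [e1, e2, e3]
  -- continuity of the kernels
  have hXc : ∀ k : ℕ, Continuous fun s => hip s k := by
    intro k
    have h : (fun s => hip s k) = fun s => vecm (Bᵀ * (FN k)ᵀ * M * FJ s * B) :=
      funext fun s => hhip s k
    rw [h]
    exact continuous_pi fun p =>
      ((continuous_const.matrix_mul hFJc).matrix_mul continuous_const).matrix_elem p.1 p.2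
  have hYc : ∀ k : ℕ, Continuous fun s => hipr s k := by
    intro k
    have h : (fun s => hipr s k) = fun s => vecm (Brᵀ * (FNr k)ᵀ * Mr * FJr s * Br) :=
      funext fun s => hhipr s k
    rw [h]
    exact continuous_pi fun p =>
      ((continuous_const.matrix_mul hFJrc).matrix_mul continuous_const).matrix_elem p.1 p.2
  have hGc : Continuous fun s => ∑ k ∈ Finset.range ν,
      Real.sqrt (enormSq (hip s k - hipr s k)) := by
    refine continuous_finset_sum _ fun k _ => Real.continuous_sqrt.comp ?_
    have h : (fun s => enormSq (hip s k - hipr s k))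
        = fun s => ∑ p : Fin m × Fin m, (hip s k p - hipr s k p) ^ 2 := rfl
    rw [h]
    exact continuous_finset_sum _ fun p _ =>
      (((continuous_apply p).comp (hXc k)).sub ((continuous_apply p).comp (hYc k))).pow 2
  have huc : Continuous u := hu.continuous
  have hunorm : Continuous fun τ => Real.sqrt (enormSq (u τ)) := by
    refine Real.continuous_sqrt.comp ?_
    have h : (fun τ => enormSq (u τ)) = fun τ => ∑ i, (u τ i) ^ 2 := rfl
    rw [h]
    exact continuous_finset_sum _ fun i _ => ((continuous_apply i).comp huc).pow 2
  -- bounds from the C-norm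
  have huCbound : ∀ k, k < ν → ∀ τ : ℝ, 0 ≤ τ →
      Real.sqrt (enormSq (iteratedDeriv k u τ)) ≤ uC := by
    intro k hk τ hτ
    rw [huC]
    obtain ⟨c, hc⟩ := hubd k hk
    have hbdd : BddAbove (Set.range fun x : {s : ℝ // 0 ≤ s} =>
        Real.sqrt (enormSq (iteratedDeriv k u x.1))) := by
      refine ⟨c, ?_⟩
      rintro y ⟨x, rfl⟩
      exact hc x.1 x.2
    have h1 : Real.sqrt (enormSq (iteratedDeriv k u τ)) ≤
        ⨆ x : {s : ℝ // 0 ≤ s}, Real.sqrt (enormSq (iteratedDeriv k u x.1)) :=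
      le_ciSup hbdd ⟨τ, hτ⟩
    refine le_trans h1 ?_
    have h2 : BddAbove (Set.range fun kk : Fin ν => ⨆ x : {s : ℝ // 0 ≤ s},
        Real.sqrt (enormSq (iteratedDeriv kk.1 u x.1))) := (Set.finite_range _).bddAbove
    exact le_ciSup h2 (⟨k, hk⟩ : Fin ν)
  -- main estimate
  intro t ht
  have huC0 : 0 ≤ uC := le_trans (Real.sqrt_nonneg _) (huCbound 0 hν 0 le_rfl)
  have huL20 : 0 ≤ uL2 := huL2 ▸ Real.sqrt_nonneg _
  have hcont1 : Continuous fun τ => ∑ k ∈ Finset.range ν,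
      dotv (hip (t - τ) k) (kron (u τ) (iteratedDeriv k u t)) := by
    refine continuous_finset_sum _ fun k _ => ?_
    have h : (fun τ => dotv (hip (t - τ) k) (kron (u τ) (iteratedDeriv k u t)))
        = fun τ => ∑ p : Fin m × Fin m,
            hip (t - τ) k p * (u τ p.1 * iteratedDeriv k u t p.2) := rfl
    rw [h]
    refine continuous_finset_sum _ fun p _ => Continuous.mul ?_ (Continuous.mul ?_
      continuous_const)
    · exact (continuous_apply p).comp ((hXc k).comp (continuous_const.sub continuous_id))
    · exact (continuous_apply p.1).comp huc
  have hcont2 : Continuous fun τ => ∑ k ∈ Finset.range ν,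
      dotv (hipr (t - τ) k) (kron (u τ) (iteratedDeriv k u t)) := by
    refine continuous_finset_sum _ fun k _ => ?_
    have h : (fun τ => dotv (hipr (t - τ) k) (kron (u τ) (iteratedDeriv k u t)))
        = fun τ => ∑ p : Fin m × Fin m,
            hipr (t - τ) k p * (u τ p.1 * iteratedDeriv k u t p.2) := rfl
    rw [h]
    refine continuous_finset_sum _ fun p _ => Continuous.mul ?_ (Continuous.mul ?_
      continuous_const)
    · exact (continuous_apply p).comp ((hYc k).comp (continuous_const.sub continuous_id))
    · exact (continuous_apply p.1).comp huc
  have hcontd : Continuous fun τ => ∑ k ∈ Finset.range ν,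
      dotv (hip (t - τ) k - hipr (t - τ) k) (kron (u τ) (iteratedDeriv k u t)) := by
    have h : (fun τ => ∑ k ∈ Finset.range ν,
        dotv (hip (t - τ) k - hipr (t - τ) k) (kron (u τ) (iteratedDeriv k u t)))
        = fun τ => (∑ k ∈ Finset.range ν,
            dotv (hip (t - τ) k) (kron (u τ) (iteratedDeriv k u t)))
          - ∑ k ∈ Finset.range ν,
            dotv (hipr (t - τ) k) (kron (u τ) (iteratedDeriv k u t)) := by
      funext τ
      rw [← Finset.sum_sub_distrib]
      exact Finset.sum_congr rfl fun k _ => dotv_sub_left' _ _ _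
    rw [h]
    exact hcont1.sub hcont2
  have hIy : yip t - yipr t = ∫ τ in Set.Ioc (0:ℝ) t, ∑ k ∈ Finset.range ν,
      dotv (hip (t - τ) k - hipr (t - τ) k) (kron (u τ) (iteratedDeriv k u t)) := by
    rw [hyip, hyipr, ← MeasureTheory.integral_sub hcont1.integrableOn_Ioc
      hcont2.integrableOn_Ioc]
    refine MeasureTheory.integral_congr_ae (Filter.Eventually.of_forall fun τ => ?_)
    dsimp only
    rw [← Finset.sum_sub_distrib]
    exact (Finset.sum_congr rfl fun k _ => dotv_sub_left' _ _ _).symm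
  -- pointwise bound
  have hptw : ∀ τ ∈ Set.Ioc (0:ℝ) t,
      |∑ k ∈ Finset.range ν, dotv (hip (t - τ) k - hipr (t - τ) k)
        (kron (u τ) (iteratedDeriv k u t))|
      ≤ uC * ((∑ k ∈ Finset.range ν, Real.sqrt (enormSq (hip (t - τ) k - hipr (t - τ) k))) *
          Real.sqrt (enormSq (u τ))) := by
    intro τ hτ
    calc |∑ k ∈ Finset.range ν, dotv (hip (t - τ) k - hipr (t - τ) k)
          (kron (u τ) (iteratedDeriv k u t))|
        ≤ ∑ k ∈ Finset.range ν, |dotv (hip (t - τ) k - hipr (t - τ) k)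
          (kron (u τ) (iteratedDeriv k u t))| := Finset.abs_sum_le_sum_abs _ _
      _ ≤ ∑ k ∈ Finset.range ν, Real.sqrt (enormSq (hip (t - τ) k - hipr (t - τ) k)) *
          (Real.sqrt (enormSq (u τ)) * uC) := by
          refine Finset.sum_le_sum fun k hk => ?_
          have h1 := abs_dotv_le' (hip (t - τ) k - hipr (t - τ) k)
            (kron (u τ) (iteratedDeriv k u t))
          rw [enormSq_kron', Real.sqrt_mul (enormSq_nonneg' _)] at h1
          refine le_trans h1 ?_
          refine mul_le_mul_of_nonneg_left ?_ (Real.sqrt_nonneg _)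
          exact mul_le_mul_of_nonneg_left
            (huCbound k (Finset.mem_range.mp hk) t ht) (Real.sqrt_nonneg _)
      _ = uC * ((∑ k ∈ Finset.range ν, Real.sqrt (enormSq (hip (t - τ) k - hipr (t - τ) k))) *
          Real.sqrt (enormSq (u τ))) := by
          rw [← Finset.sum_mul]
          ring
  have hmain1 : |yip t - yipr t| ≤ ∫ τ in Set.Ioc (0:ℝ) t,
      uC * ((∑ k ∈ Finset.range ν, Real.sqrt (enormSq (hip (t - τ) k - hipr (t - τ) k))) *
        Real.sqrt (enormSq (u τ))) := by
    rw [hIy, ← Real.norm_eq_abs]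
    refine le_trans (MeasureTheory.norm_integral_le_integral_norm _) ?_
    refine MeasureTheory.setIntegral_mono_on hcontd.abs.integrableOn_Ioc
      ((continuous_const.mul ((hGc.comp (continuous_const.sub continuous_id)).mul
        hunorm)).integrableOn_Ioc) measurableSet_Ioc ?_
    intro τ hτ
    rw [Real.norm_eq_abs]
    exact hptw τ hτ
  -- Hölder / Cauchy-Schwarz step
  have hGcomp : Continuous fun τ => ∑ k ∈ Finset.range ν,
      Real.sqrt (enormSq (hip (t - τ) k - hipr (t - τ) k)) :=
    hGc.comp (continuous_const.sub continuous_id)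
  have hH : (∫ τ in Set.Ioc (0:ℝ) t,
      (∑ k ∈ Finset.range ν, Real.sqrt (enormSq (hip (t - τ) k - hipr (t - τ) k))) *
        Real.sqrt (enormSq (u τ)))
      ≤ Real.sqrt (∫ τ in Set.Ioc (0:ℝ) t,
          (∑ k ∈ Finset.range ν, Real.sqrt (enormSq (hip (t - τ) k - hipr (t - τ) k))) ^ 2) *
        Real.sqrt (∫ τ in Set.Ioc (0:ℝ) t, enormSq (u τ)) := by
    have hpq : Real.HolderConjugate 2 2 := Real.holderConjugate_iff.2 ⟨by norm_num, by norm_num⟩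
    have hmem1 : MeasureTheory.MemLp (fun τ => ∑ k ∈ Finset.range ν,
        Real.sqrt (enormSq (hip (t - τ) k - hipr (t - τ) k))) (ENNReal.ofReal 2)
        (MeasureTheory.volume.restrict (Set.Ioc (0:ℝ) t)) := by
      rw [show ENNReal.ofReal 2 = 2 from by norm_num]
      refine (MeasureTheory.memLp_two_iff_integrable_sq
        hGcomp.aestronglyMeasurable).2 ?_
      exact (hGcomp.pow 2).integrableOn_Ioc
    have hmem2 : MeasureTheory.MemLp (fun τ => Real.sqrt (enormSq (u τ))) (ENNReal.ofReal 2)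
        (MeasureTheory.volume.restrict (Set.Ioc (0:ℝ) t)) := by
      rw [show ENNReal.ofReal 2 = 2 from by norm_num]
      refine (MeasureTheory.memLp_two_iff_integrable_sq
        hunorm.aestronglyMeasurable).2 ?_
      exact (hunorm.pow 2).integrableOn_Ioc
    have h := MeasureTheory.integral_mul_le_Lp_mul_Lq_of_nonneg hpq
      (Filter.Eventually.of_forall fun τ =>
        Finset.sum_nonneg fun k _ => Real.sqrt_nonneg _)
      (Filter.Eventually.of_forall fun τ => Real.sqrt_nonneg _) hmem1 hmem2
    have hrpow : ∀ x : ℝ, x ^ (2:ℝ) = x ^ 2 := fun x => by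
      rw [show (2:ℝ) = ((2:ℕ):ℝ) from by norm_num, Real.rpow_natCast]
    simp only [hrpow] at h
    rw [← Real.sqrt_eq_rpow, ← Real.sqrt_eq_rpow] at h
    refine le_trans h ?_
    have hsq : ∀ τ, Real.sqrt (enormSq (u τ)) ^ 2 = enormSq (u τ) :=
      fun τ => Real.sq_sqrt (enormSq_nonneg' _)
    simp only [hsq]
    exact le_refl _
  -- shift the integration variable
  have hshift : (∫ τ in Set.Ioc (0:ℝ) t,
      (∑ k ∈ Finset.range ν, Real.sqrt (enormSq (hip (t - τ) k - hipr (t - τ) k))) ^ 2)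
      = ∫ s in Set.Ioc (0:ℝ) t,
        (∑ k ∈ Finset.range ν, Real.sqrt (enormSq (hip s k - hipr s k))) ^ 2 := by
    rw [← intervalIntegral.integral_of_le ht, ← intervalIntegral.integral_of_le ht]
    have h := intervalIntegral.integral_comp_sub_left (a := (0:ℝ)) (b := t)
      (fun s => (∑ k ∈ Finset.range ν, Real.sqrt (enormSq (hip s k - hipr s k))) ^ 2) t
    simpa [sub_self, sub_zero] using h
  -- bound the shifted integral by the trace expression
  have hGb : (∫ s in Set.Ioc (0:ℝ) t,
      (∑ k ∈ Finset.range ν, Real.sqrt (enormSq (hip s k - hipr s k))) ^ 2)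
      ≤ (ν : ℝ) * ∫ s in Set.Ioi (0:ℝ), ∑ k ∈ Finset.range ν,
          enormSq (hip s k - hipr s k) := by
    have hptw2 : ∀ s : ℝ,
        (∑ k ∈ Finset.range ν, Real.sqrt (enormSq (hip s k - hipr s k))) ^ 2
        ≤ (ν : ℝ) * ∑ k ∈ Finset.range ν, enormSq (hip s k - hipr s k) := by
      intro s
      have h := sq_sum_le_card_mul_sum_sq (s := Finset.range ν)
        (f := fun k => Real.sqrt (enormSq (hip s k - hipr s k)))
      rw [Finset.card_range] at h
      refine le_trans h (le_of_eq ?_)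
      congr 1
      exact Finset.sum_congr rfl fun k _ => Real.sq_sqrt (enormSq_nonneg' _)
    calc (∫ s in Set.Ioc (0:ℝ) t,
        (∑ k ∈ Finset.range ν, Real.sqrt (enormSq (hip s k - hipr s k))) ^ 2)
        ≤ ∫ s in Set.Ioc (0:ℝ) t, (ν : ℝ) * ∑ k ∈ Finset.range ν,
            enormSq (hip s k - hipr s k) := by
          refine MeasureTheory.setIntegral_mono_on ((hGc.pow 2).integrableOn_Ioc)
            (MeasureTheory.IntegrableOn.mono_set (hDint.const_mul _) Set.Ioc_subset_Ioi_self) measurableSet_Ioc ?_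
          exact fun s _ => hptw2 s
      _ ≤ ∫ s in Set.Ioi (0:ℝ), (ν : ℝ) * ∑ k ∈ Finset.range ν,
            enormSq (hip s k - hipr s k) := by
          refine MeasureTheory.setIntegral_mono_set (hDint.const_mul _)
            (Filter.Eventually.of_forall fun s => ?_)
            (HasSubset.Subset.eventuallyLE Set.Ioc_subset_Ioi_self)
          exact mul_nonneg (Nat.cast_nonneg _)
            (Finset.sum_nonneg fun k _ => enormSq_nonneg' _)
      _ = (ν : ℝ) * ∫ s in Set.Ioi (0:ℝ), ∑ k ∈ Finset.range ν,
            enormSq (hip s k - hipr s k) := MeasureTheory.integral_const_mul _ _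
  have h2nd : (∫ τ in Set.Ioc (0:ℝ) t, enormSq (u τ))
      ≤ ∫ τ in Set.Ioi (0:ℝ), enormSq (u τ) :=
    MeasureTheory.setIntegral_mono_set husq
      (Filter.Eventually.of_forall fun τ => enormSq_nonneg' _)
      (HasSubset.Subset.eventuallyLE Set.Ioc_subset_Ioi_self)
  -- final assembly
  calc |yip t - yipr t|
      ≤ ∫ τ in Set.Ioc (0:ℝ) t, uC *
        ((∑ k ∈ Finset.range ν, Real.sqrt (enormSq (hip (t - τ) k - hipr (t - τ) k))) *
          Real.sqrt (enormSq (u τ))) := hmain1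
    _ = uC * ∫ τ in Set.Ioc (0:ℝ) t,
        (∑ k ∈ Finset.range ν, Real.sqrt (enormSq (hip (t - τ) k - hipr (t - τ) k))) *
          Real.sqrt (enormSq (u τ)) := MeasureTheory.integral_const_mul _ _
    _ ≤ uC * (Real.sqrt (∫ τ in Set.Ioc (0:ℝ) t,
          (∑ k ∈ Finset.range ν, Real.sqrt (enormSq (hip (t - τ) k - hipr (t - τ) k))) ^ 2) *
        Real.sqrt (∫ τ in Set.Ioc (0:ℝ) t, enormSq (u τ))) :=
        mul_le_mul_of_nonneg_left hH huC0
    _ ≤ uC * (Real.sqrt ((ν : ℝ) * ∫ s in Set.Ioi (0:ℝ), ∑ k ∈ Finset.range ν,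
          enormSq (hip s k - hipr s k)) * uL2) := by
        refine mul_le_mul_of_nonneg_left ?_ huC0
        refine mul_le_mul ?_ ?_ (Real.sqrt_nonneg _) (Real.sqrt_nonneg _)
        · rw [hshift]
          exact Real.sqrt_le_sqrt hGb
        · rw [huL2]
          exact Real.sqrt_le_sqrt h2nd
    _ = Real.sqrt (Matrix.trace (Pp * M * Pimp * M) -
          2 * Matrix.trace (Ptpᵀ * M * Pti * Mr) +
          Matrix.trace (Ppr * Mr * Pimpr * Mr)) * Real.sqrt (ν : ℝ) * uC * uL2 := by
        rw [← hTR] at *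
        rw [Real.sqrt_mul (Nat.cast_nonneg _)]
        ring
end
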